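/- (Jensen-type inequality) Let E ⊂ ℝ^N be a measurable set with 0 < |E| < ∞ and let u ∈ L^1(E) satisfy (1/|E|)∫_E u dx = 1. Then for all real r ≥ 1 and λ ≥ 0, the function x ↦ (u(x)^⟨r⟩ − λ^r)^⟨1/r⟩ is integrable on E and (1/|E|)∫_E (u^⟨r⟩ − λ^r)^⟨1/r⟩ dx ≥ 1 − 2^{(r−1)/r}·λ. -/

import Mathlib

open MeasureTheory Metric Set Filter Topology

noncomputable section

/-- Signed power `a^⟨q⟩ = |a|^(q-1) · a`. -/
def spow (a q : ℝ) : ℝ := |a| ^ (q - 1) * a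

/-- Euclidean space `ℝ^N`. -/
abbrev Rn (N : ℕ) := EuclideanSpace ℝ (Fin N)

/-- The integrand of the Gagliardo seminorm. -/
def energyIntegrand (N : ℕ) (p s : ℝ) (φ : Rn N → ℝ) (z : Rn N × Rn N) : ℝ :=
  |φ z.1 - φ z.2| ^ p / ‖z.1 - z.2‖ ^ ((N : ℝ) + p * s)

/-- The integrand of the nonlinear pairing `(u, φ)`. -/
def gker (N : ℕ) (p s : ℝ) (u φ : Rn N → ℝ) (z : Rn N × Rn N) : ℝ :=
  spow (u z.1 - u z.2) (p - 1) * (φ z.1 - φ z.2) / ‖z.1 - z.2‖ ^ ((N : ℝ) + p * s)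

/-- `φ ∈ W^{s,p}_0(Ω)`. -/
def memW0 (N : ℕ) (p s : ℝ) (Ω : Set (Rn N)) (φ : Rn N → ℝ) : Prop :=
  MemLp φ (ENNReal.ofReal p) volume ∧
  Integrable (energyIntegrand N p s φ) volume ∧
  ∀ᵐ x, x ∉ Ω → φ x = 0

/-- `u ∈ W̃^{s,p}(Ω)` (for bounded `Ω`). -/
def memWtilde (N : ℕ) (p s : ℝ) (Ω : Set (Rn N)) (u : Rn N → ℝ) : Prop :=
  AEStronglyMeasurable u volume ∧
  (∀ K : Set (Rn N), IsCompact K → IntegrableOn (fun x => |u x| ^ p) K) ∧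
  (∃ U : Set (Rn N), IsOpen U ∧ closure Ω ⊆ U ∧
     IntegrableOn (fun x => |u x| ^ p) U ∧
     IntegrableOn (energyIntegrand N p s u) (U ×ˢ U)) ∧
  Integrable (fun x => |u x| ^ (p - 1) / (1 + ‖x‖) ^ ((N : ℝ) + p * s))

/-- `u ∈ W̃^{s,p}_loc(Ω)`. -/
def memWtildeLoc (N : ℕ) (p s : ℝ) (Ω : Set (Rn N)) (u : Rn N → ℝ) : Prop :=
  ∀ Ω' : Set (Rn N), IsOpen Ω' → Bornology.IsBounded Ω' → Ω' ⊆ Ω → memWtilde N p s Ω' u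

/-- `u` is a weak solution of `(-Δ)^s_p u = f` in `Ω`. -/
def isWeakSol (N : ℕ) (p s : ℝ) (Ω : Set (Rn N)) (u f : Rn N → ℝ) : Prop :=
  ∀ Ω' : Set (Rn N), IsOpen Ω' → Bornology.IsBounded Ω' → Ω' ⊆ Ω →
    ∀ φ : Rn N → ℝ, memW0 N p s Ω' φ →
      (∫ z : Rn N × Rn N, gker N p s u φ z) = ∫ x in Ω', f x * φ x

/-- `(-Δ)^s_p u ≤ g` weakly in `Ω`. -/
def weakLE (N : ℕ) (p s : ℝ) (Ω : Set (Rn N)) (u g : Rn N → ℝ) : Prop :=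
  ∀ φ : Rn N → ℝ, memW0 N p s Ω φ → (∀ᵐ x, 0 ≤ φ x) →
    (∫ z : Rn N × Rn N, gker N p s u φ z) ≤ ∫ x in Ω, g x * φ x

/-- `(-Δ)^s_p u ≥ g` weakly in `Ω`. -/
def weakGE (N : ℕ) (p s : ℝ) (Ω : Set (Rn N)) (u g : Rn N → ℝ) : Prop :=
  ∀ φ : Rn N → ℝ, memW0 N p s Ω φ → (∀ᵐ x, 0 ≤ φ x) →
    (∫ x in Ω, g x * φ x) ≤ ∫ z : Rn N × Rn N, gker N p s u φ z

/-- The nonlocal tail. -/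
def tailF (N : ℕ) (p s : ℝ) (v : Rn N → ℝ) (x₀ : Rn N) (R : ℝ) : ℝ :=
  (R ^ (p * s) * ∫ y in {y : Rn N | R ≤ dist y x₀}, |v y| ^ (p - 1) / ‖x₀ - y‖ ^ ((N : ℝ) + p * s)) ^ (1 / (p - 1))


open scoped NNReal

lemma spow_of_nonneg {a : ℝ} (h : 0 ≤ a) {q : ℝ} (hq : 0 < q) : spow a q = a ^ q := by
  unfold spow
  rw [abs_of_nonneg h]
  rcases eq_or_lt_of_le h with h0 | h0
  · simp [← h0, Real.zero_rpow hq.ne']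
  · rw [show a ^ (q - 1) * a = a ^ (q - 1) * a ^ (1 : ℝ) by rw [Real.rpow_one],
      ← Real.rpow_add h0]
    norm_num

lemma spow_of_nonpos {a : ℝ} (h : a ≤ 0) {q : ℝ} (hq : 0 < q) : spow a q = -((-a) ^ q) := by
  have : spow a q = -spow (-a) q := by unfold spow; rw [abs_neg]; ring
  rw [this, spow_of_nonneg (neg_nonneg.2 h) hq]

lemma abs_spow (a : ℝ) {q : ℝ} (hq : 0 < q) : |spow a q| = |a| ^ q := by
  rw [← spow_of_nonneg (abs_nonneg a) hq]
  unfold spow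
  rw [abs_mul, abs_of_nonneg (Real.rpow_nonneg (abs_nonneg a) _), abs_abs]

lemma measurable_spow (q : ℝ) : Measurable fun a : ℝ => spow a q := by
  unfold spow
  exact (measurable_id.abs.pow_const _).mul measurable_id

lemma rpow_add_le' {x y q : ℝ} (hx : 0 ≤ x) (hy : 0 ≤ y) (hq0 : 0 ≤ q) (hq1 : q ≤ 1) :
    (x + y) ^ q ≤ x ^ q + y ^ q := by
  have h := NNReal.rpow_add_le_add_rpow x.toNNReal y.toNNReal hq0 hq1
  have : ((x.toNNReal + y.toNNReal : ℝ≥0) : ℝ) = x + y := by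
    simp [Real.coe_toNNReal, hx, hy]
  calc (x + y) ^ q = (((x.toNNReal + y.toNNReal : ℝ≥0) : ℝ)) ^ q := by rw [this]
    _ = (((x.toNNReal + y.toNNReal) ^ q : ℝ≥0) : ℝ) := by rw [NNReal.coe_rpow]
    _ ≤ ((x.toNNReal ^ q + y.toNNReal ^ q : ℝ≥0) : ℝ) := by exact_mod_cast h
    _ = x ^ q + y ^ q := by
        push_cast [NNReal.coe_rpow, Real.coe_toNNReal _ hx, Real.coe_toNNReal _ hy]
        ring

lemma rpow_add_rpow_le_rpow' {x y p : ℝ} (hx : 0 ≤ x) (hy : 0 ≤ y) (hp : 1 ≤ p) :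
    x ^ p + y ^ p ≤ (x + y) ^ p := by
  have h := NNReal.add_rpow_le_rpow_add x.toNNReal y.toNNReal hp
  have hxy : ((x.toNNReal + y.toNNReal : ℝ≥0) : ℝ) = x + y := by
    simp [Real.coe_toNNReal, hx, hy]
  calc x ^ p + y ^ p = ((x.toNNReal ^ p + y.toNNReal ^ p : ℝ≥0) : ℝ) := by
        push_cast [NNReal.coe_rpow, Real.coe_toNNReal _ hx, Real.coe_toNNReal _ hy]; ring
    _ ≤ (((x.toNNReal + y.toNNReal) ^ p : ℝ≥0) : ℝ) := by exact_mod_cast h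
    _ = (x + y) ^ p := by rw [NNReal.coe_rpow, hxy]

lemma two_rpow_ineq {x y p : ℝ} (hx : 0 ≤ x) (hy : 0 ≤ y) (hp : 1 ≤ p) :
    (x + y) ^ p ≤ 2 ^ (p - 1) * (x ^ p + y ^ p) := by
  have h := NNReal.rpow_add_le_mul_rpow_add_rpow x.toNNReal y.toNNReal hp
  have hxy : ((x.toNNReal + y.toNNReal : ℝ≥0) : ℝ) = x + y := by
    simp [Real.coe_toNNReal, hx, hy]
  calc (x + y) ^ p = (((x.toNNReal + y.toNNReal) ^ p : ℝ≥0) : ℝ) := by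
        rw [NNReal.coe_rpow, hxy]
    _ ≤ (((2 : ℝ≥0) ^ (p - 1) * (x.toNNReal ^ p + y.toNNReal ^ p) : ℝ≥0) : ℝ) := by
        exact_mod_cast h
    _ = 2 ^ (p - 1) * (x ^ p + y ^ p) := by
        push_cast [NNReal.coe_rpow, Real.coe_toNNReal _ hx, Real.coe_toNNReal _ hy]; ring

lemma spow_abs_bound {r lam : ℝ} (hr : 1 ≤ r) (hl : 0 ≤ lam) (a : ℝ) :
    |spow (spow a r - lam ^ r) (1 / r)| ≤ |a| + lam := by
  have hr0 : 0 < r := lt_of_lt_of_le one_pos hr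
  have hq : 0 < 1 / r := by positivity
  have hq1 : 1 / r ≤ 1 := by rw [div_le_one hr0]; exact hr
  rw [abs_spow _ hq]
  have h1 : |spow a r - lam ^ r| ≤ |a| ^ r + lam ^ r := by
    calc |spow a r - lam ^ r| ≤ |spow a r| + |lam ^ r| := abs_sub _ _
      _ = |a| ^ r + lam ^ r := by
          rw [abs_spow _ hr0, abs_of_nonneg (Real.rpow_nonneg hl r)]
  calc |spow a r - lam ^ r| ^ (1 / r) ≤ (|a| ^ r + lam ^ r) ^ (1 / r) :=
        Real.rpow_le_rpow (abs_nonneg _) h1 hq.le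
    _ ≤ (|a| ^ r) ^ (1 / r) + (lam ^ r) ^ (1 / r) :=
        rpow_add_le' (Real.rpow_nonneg (abs_nonneg a) r) (Real.rpow_nonneg hl r) hq.le hq1
    _ = |a| + lam := by
        rw [← Real.rpow_mul (abs_nonneg a), ← Real.rpow_mul hl, mul_one_div_cancel hr0.ne',
          Real.rpow_one, Real.rpow_one]

lemma spow_key {r lam : ℝ} (hr : 1 ≤ r) (hl : 0 ≤ lam) (a : ℝ) :
    a - 2 ^ ((r - 1) / r) * lam ≤ spow (spow a r - lam ^ r) (1 / r) := by
  have hr0 : 0 < r := lt_of_lt_of_le one_pos hr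
  have hq : 0 < 1 / r := by positivity
  have hq1 : 1 / r ≤ 1 := by rw [div_le_one hr0]; exact hr
  have hc : (1 : ℝ) ≤ 2 ^ ((r - 1) / r) := by
    calc (1 : ℝ) = 2 ^ (0 : ℝ) := (Real.rpow_zero 2).symm
      _ ≤ 2 ^ ((r - 1) / r) := Real.rpow_le_rpow_of_exponent_le one_le_two
          (div_nonneg (by linarith) hr0.le)
  have hclam : lam ≤ 2 ^ ((r - 1) / r) * lam := le_mul_of_one_le_left hl hc
  have hlamr : (lam ^ r) ^ (1 / r) = lam := by
    rw [← Real.rpow_mul hl, mul_one_div_cancel hr0.ne', Real.rpow_one]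
  rcases le_or_gt a 0 with ha | ha
  · rw [spow_of_nonpos ha hr0]
    have hna : (0 : ℝ) ≤ -a := neg_nonneg.2 ha
    have hnar : (0 : ℝ) ≤ (-a) ^ r := Real.rpow_nonneg hna r
    have hlr : (0 : ℝ) ≤ lam ^ r := Real.rpow_nonneg hl r
    have hb : -(-a) ^ r - lam ^ r ≤ 0 := by linarith
    rw [spow_of_nonpos hb hq, show -(-(-a) ^ r - lam ^ r) = (-a) ^ r + lam ^ r by ring]
    have hsub : ((-a) ^ r + lam ^ r) ^ (1 / r) ≤ -a + lam := by
      calc ((-a) ^ r + lam ^ r) ^ (1 / r) ≤ ((-a) ^ r) ^ (1 / r) + (lam ^ r) ^ (1 / r) :=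
            rpow_add_le' hnar hlr hq.le hq1
        _ = -a + lam := by
            rw [hlamr, ← Real.rpow_mul hna, mul_one_div_cancel hr0.ne', Real.rpow_one]
    linarith
  rcases le_or_gt a lam with hal | hal
  · rw [spow_of_nonneg ha.le hr0]
    have har : a ^ r ≤ lam ^ r := Real.rpow_le_rpow ha.le hal hr0.le
    rw [spow_of_nonpos (by linarith) hq, neg_sub]
    have hy0 : (0 : ℝ) ≤ lam ^ r - a ^ r := by linarith
    set y := (lam ^ r - a ^ r) ^ (1 / r) with hy
    have hyn : 0 ≤ y := Real.rpow_nonneg hy0 _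
    have hyr : y ^ r = lam ^ r - a ^ r := by
      rw [hy, ← Real.rpow_mul hy0, one_div_mul_cancel hr0.ne', Real.rpow_one]
    have h2 : (a + y) ^ r ≤ 2 ^ (r - 1) * lam ^ r := by
      calc (a + y) ^ r ≤ 2 ^ (r - 1) * (a ^ r + y ^ r) := two_rpow_ineq ha.le hyn hr
        _ = 2 ^ (r - 1) * lam ^ r := by rw [hyr]; ring
    have h3 : a + y ≤ 2 ^ ((r - 1) / r) * lam := by
      have h := Real.rpow_le_rpow (by positivity) h2 hq.le
      rwa [← Real.rpow_mul (by positivity : (0 : ℝ) ≤ a + y), mul_one_div_cancel hr0.ne',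
        Real.rpow_one,
        Real.mul_rpow (by positivity) (Real.rpow_nonneg hl r),
        ← Real.rpow_mul (by norm_num : (0:ℝ) ≤ 2), mul_one_div, hlamr] at h
    linarith
  · rw [spow_of_nonneg ha.le hr0]
    have hb0 : (0 : ℝ) ≤ a ^ r - lam ^ r := by
      have := Real.rpow_le_rpow hl hal.le hr0.le; linarith
    rw [spow_of_nonneg hb0 hq]
    have h4 : (a - lam) ^ r + lam ^ r ≤ a ^ r := by
      have h := rpow_add_rpow_le_rpow' (by linarith : (0 : ℝ) ≤ a - lam) hl hr
      rwa [sub_add_cancel] at h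
    have h5 : a - lam ≤ (a ^ r - lam ^ r) ^ (1 / r) := by
      have h6 : (a - lam) ^ r ≤ a ^ r - lam ^ r := by linarith
      have h := Real.rpow_le_rpow (Real.rpow_nonneg (by linarith) r) h6 hq.le
      rwa [← Real.rpow_mul (by linarith : (0:ℝ) ≤ a - lam), mul_one_div_cancel hr0.ne',
        Real.rpow_one] at h
    linarith

/-- Lemma 5.1, Jensen-type inequality. -/
theorem statement15 (N : ℕ) (hN : 1 ≤ N) (E : Set (Rn N)) (hE : MeasurableSet E)
    (hE0 : 0 < volume E) (hEfin : volume E < ⊤)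
    (u : Rn N → ℝ) (hu : IntegrableOn u E)
    (havg : (volume E).toReal⁻¹ * ∫ x in E, u x = 1) :
    ∀ r : ℝ, 1 ≤ r → ∀ lam : ℝ, 0 ≤ lam →
      IntegrableOn (fun x => spow (spow (u x) r - lam ^ r) (1 / r)) E ∧
      1 - 2 ^ ((r - 1) / r) * lam ≤
        (volume E).toReal⁻¹ * ∫ x in E, spow (spow (u x) r - lam ^ r) (1 / r) := by
  intro r hr lam hl
  have hm0 : 0 < (volume E).toReal := ENNReal.toReal_pos hE0.ne' hEfin.ne
  set m := (volume E).toReal with hm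
  have hconst : ∀ c : ℝ, IntegrableOn (fun _ => c) E volume := fun c =>
    integrableOn_const hEfin.ne (by simp)
  have hmeas : AEStronglyMeasurable (fun x => spow (spow (u x) r - lam ^ r) (1 / r))
      (volume.restrict E) := by
    have h1 : AEMeasurable u (volume.restrict E) := hu.aemeasurable
    have h2 : AEMeasurable (fun x => spow (u x) r - lam ^ r) (volume.restrict E) :=
      ((measurable_spow r).comp_aemeasurable h1).sub aemeasurable_const
    exact ((measurable_spow (1 / r)).comp_aemeasurable h2).aestronglyMeasurable
  have hbound : Integrable (fun x => |u x| + lam) (volume.restrict E) :=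
    hu.abs.add (hconst lam)
  have hint : IntegrableOn (fun x => spow (spow (u x) r - lam ^ r) (1 / r)) E := by
    refine hbound.mono' hmeas (Filter.Eventually.of_forall fun x => ?_)
    rw [Real.norm_eq_abs]
    exact spow_abs_bound hr hl (u x)
  refine ⟨hint, ?_⟩
  have hsub : IntegrableOn (fun x => u x - 2 ^ ((r - 1) / r) * lam) E :=
    hu.sub (hconst _)
  have hmono : ∫ x in E, (u x - 2 ^ ((r - 1) / r) * lam) ≤
      ∫ x in E, spow (spow (u x) r - lam ^ r) (1 / r) :=
    setIntegral_mono_on hsub hint hE fun x _ => spow_key hr hl (u x)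
  rw [integral_sub hu (hconst _), setIntegral_const, smul_eq_mul] at hmono
  have huint : ∫ x in E, u x = m := by
    have h := havg
    field_simp [hm0.ne'] at h
    linarith [h]
  rw [huint] at hmono
  have key : 1 - 2 ^ ((r - 1) / r) * lam =
      m⁻¹ * (m - m * (2 ^ ((r - 1) / r) * lam)) := by
    field_simp
  rw [key]
  exact mul_le_mul_of_nonneg_left hmono (inv_nonneg.2 hm0.le)

end
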